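/- Let W = (ℤ/2)⁵ ⋊ S₅ act on Δ = {1,...,5} × ℤ/2 as specified. A subgroup H ≤ W is conjugate, by an element of the subgroup (ℤ/2)⁵ ⋊ {1}, to a subgroup of {0} ⋊ S₅ if and only if there exists a subset T ⊆ Δ that the first projection maps bijectively onto {1,...,5} and that is setwise stable under the action of H. -/

import Mathlib

/-- The coordinate-permutation automorphism of `(ℤ/2)⁵`: `(π • ε) j = ε (π⁻¹ j)`. -/
def permAddAut (π : Equiv.Perm (Fin 5)) : (Fin 5 → ZMod 2) ≃+ (Fin 5 → ZMod 2) where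
  toFun v := fun j => v (π⁻¹ j)
  invFun v := fun j => v (π j)
  left_inv v := by funext j; simp
  right_inv v := by funext j; simp
  map_add' a b := rfl

/-- The action of `S₅` on `(ℤ/2)⁵` as a homomorphism to the automorphism group. -/
def wAut : Equiv.Perm (Fin 5) →* MulAut (Multiplicative (Fin 5 → ZMod 2)) where
  toFun π := AddEquiv.toMultiplicative (permAddAut π)
  map_one' := by
    apply MulEquiv.ext
    intro v
    rfl
  map_mul' := by
    intro σ τ
    apply MulEquiv.ext
    intro v
    show Multiplicative.ofAdd (permAddAut (σ * τ) (Multiplicative.toAdd v)) =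
      Multiplicative.ofAdd (permAddAut σ (permAddAut τ (Multiplicative.toAdd v)))
    have : permAddAut (σ * τ) (Multiplicative.toAdd v) =
        permAddAut σ (permAddAut τ (Multiplicative.toAdd v)) := by
      funext j
      simp [permAddAut, mul_inv_rev]
    rw [this]

/-- The wreath product `W = (ℤ/2)⁵ ⋊ S₅`. -/
abbrev W : Type := SemidirectProduct (Multiplicative (Fin 5 → ZMod 2)) (Equiv.Perm (Fin 5)) wAut

/-- The action of `W` on `Δ = {1,…,5} × ℤ/2`: `(ε, π) • (i, x) = (π i, x + ε (π i))`. -/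
def act (w : W) (d : Fin 5 × ZMod 2) : Fin 5 × ZMod 2 :=
  (w.right d.1, d.2 + Multiplicative.toAdd w.left (w.right d.1))

lemma toAdd_wAut (π : Equiv.Perm (Fin 5)) (x : Multiplicative (Fin 5 → ZMod 2)) (j : Fin 5) :
    Multiplicative.toAdd (wAut π x) j = Multiplicative.toAdd x (π⁻¹ j) := rfl

lemma conj_left (h : Multiplicative (Fin 5 → ZMod 2)) (w : W) (j : Fin 5) :
    Multiplicative.toAdd
      ((SemidirectProduct.inl (φ := wAut) h * w * (SemidirectProduct.inl (φ := wAut) h)⁻¹).left) j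
    = Multiplicative.toAdd h j + Multiplicative.toAdd w.left j
      + Multiplicative.toAdd h (w.right⁻¹ j) := by
  have e1 : ((SemidirectProduct.inl (φ := wAut) h)⁻¹ : W).left = h⁻¹ := by
    rw [SemidirectProduct.inv_left, SemidirectProduct.right_inl, inv_one, map_one]
    rfl
  rw [SemidirectProduct.mul_left, SemidirectProduct.mul_left, SemidirectProduct.left_inl,
    SemidirectProduct.right_inl, map_one, SemidirectProduct.mul_right,
    SemidirectProduct.right_inl, one_mul, e1]
  show Multiplicative.toAdd (h * w.left * wAut w.right h⁻¹) j = _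
  rw [toAdd_mul, toAdd_mul]
  simp only [Pi.add_apply, toAdd_wAut, toAdd_inv, Pi.neg_apply]
  ring_nf
  generalize Multiplicative.toAdd h j = a
  generalize Multiplicative.toAdd w.left j = b
  generalize Multiplicative.toAdd h (w.right⁻¹ j) = c
  revert a b c; decide

lemma conj_mem_iff (h : Multiplicative (Fin 5 → ZMod 2)) (w : W) :
    (MulAut.conj (SemidirectProduct.inl (φ := wAut) h)).toMonoidHom w ∈
      (SemidirectProduct.inr (φ := wAut)).range ↔
    ∀ j, Multiplicative.toAdd w.left j
      = Multiplicative.toAdd h (w.right⁻¹ j) + Multiplicative.toAdd h j := by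
  constructor
  · rintro ⟨g, hg⟩ j
    have : (SemidirectProduct.inr (φ := wAut) g).left =
        (SemidirectProduct.inl (φ := wAut) h * w * (SemidirectProduct.inl (φ := wAut) h)⁻¹).left := by
      rw [hg]; rfl
    rw [SemidirectProduct.left_inr] at this
    have h2' := congrArg Multiplicative.toAdd this.symm
    have h2 := congrFun h2' j
    rw [conj_left] at h2
    have h3 : Multiplicative.toAdd (1 : Multiplicative (Fin 5 → ZMod 2)) j = 0 := rfl
    rw [h3] at h2
    revert h2
    generalize Multiplicative.toAdd w.left j = a
    generalize Multiplicative.toAdd h (w.right⁻¹ j) = b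
    generalize Multiplicative.toAdd h j = c
    revert a b c; decide
  · intro hj
    refine ⟨w.right, ?_⟩
    have hx : (SemidirectProduct.inl (φ := wAut) h * w * (SemidirectProduct.inl (φ := wAut) h)⁻¹).left = 1 := by
      have : Multiplicative.toAdd ((SemidirectProduct.inl (φ := wAut) h * w *
          (SemidirectProduct.inl (φ := wAut) h)⁻¹).left) = 0 := by
        funext j
        rw [conj_left]
        have := hj j
        revert this
        generalize Multiplicative.toAdd w.left j = a
        generalize Multiplicative.toAdd h (w.right⁻¹ j) = b
        generalize Multiplicative.toAdd h j = c
        show a = b + c → c + a + b = (0 : Fin 5 → ZMod 2) j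
        have : (0 : Fin 5 → ZMod 2) j = 0 := rfl
        rw [this]
        revert a b c; decide
      exact Multiplicative.toAdd.injective this
    have hr : (SemidirectProduct.inl (φ := wAut) h * w * (SemidirectProduct.inl (φ := wAut) h)⁻¹).right = w.right := by
      simp [SemidirectProduct.mul_right, SemidirectProduct.right_inl, SemidirectProduct.inv_right]
    have hc : (MulAut.conj (SemidirectProduct.inl (φ := wAut) h)).toMonoidHom w =
        SemidirectProduct.inl (φ := wAut) h * w * (SemidirectProduct.inl (φ := wAut) h)⁻¹ := rfl
    rw [hc]
    apply SemidirectProduct.ext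
    · rw [hx]; rfl
    · rw [hr]; rfl


/-- A subgroup `H ≤ W` is conjugate, by an element of the subgroup `(ℤ/2)⁵ ⋊ {1}`
(the range of `inl`), to a subgroup of `{0} ⋊ S₅` (the range of `inr`) if and only if
there exists a subset `T ⊆ Δ` that the first projection maps bijectively onto
`{1,…,5}` and that is setwise stable under the action of `H`. -/
theorem stmt8 (H : Subgroup W) :
    (∃ h : Multiplicative (Fin 5 → ZMod 2),
      Subgroup.map (MulAut.conj (SemidirectProduct.inl (φ := wAut) h)).toMonoidHom H ≤
        (SemidirectProduct.inr (φ := wAut)).range) ↔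
    (∃ T : Set (Fin 5 × ZMod 2),
      Set.BijOn Prod.fst T (Set.univ : Set (Fin 5)) ∧ ∀ w ∈ H, act w '' T = T) := by
  constructor
  · rintro ⟨h, hle⟩
    set f : Fin 5 → ZMod 2 := Multiplicative.toAdd h with hf
    refine ⟨{p | p.2 = f p.1}, ⟨fun p _ => Set.mem_univ _, ?_, ?_⟩, ?_⟩
    · rintro ⟨i, x⟩ hx ⟨i', x'⟩ hx' (hii' : i = i')
      simp only [Set.mem_setOf_eq] at hx hx'
      subst hii'
      simp [Prod.ext_iff, hx, hx']
    · intro i _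
      exact ⟨(i, f i), rfl, rfl⟩
    · intro w hw
      have hcond : ∀ j, Multiplicative.toAdd w.left j = f (w.right⁻¹ j) + f j := by
        have := hle (Subgroup.mem_map_of_mem _ hw)
        exact (conj_mem_iff h w).mp this
      ext ⟨j, y⟩
      simp only [Set.mem_image, Set.mem_setOf_eq]
      constructor
      · rintro ⟨⟨i, x⟩, (hx : x = f i), heq⟩
        have h1 : w.right i = j := congrArg Prod.fst heq
        have h2 : x + Multiplicative.toAdd w.left (w.right i) = y := congrArg Prod.snd heq
        subst h1
        rw [hcond (w.right i), (by simp : w.right⁻¹ (w.right i) = i), hx] at h2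
        rw [← h2]
        show f i + (f i + f (w.right i)) = f (w.right i)
        generalize f i = a; generalize f (w.right i) = b
        revert a b; decide
      · rintro (hy : y = f j)
        refine ⟨(w.right⁻¹ j, f (w.right⁻¹ j)), rfl, ?_⟩
        unfold act
        simp only [(by simp : w.right (w.right⁻¹ j) = j)]
        refine Prod.ext rfl ?_
        show f (w.right⁻¹ j) + Multiplicative.toAdd w.left j = y
        rw [hcond j, hy]
        generalize f (w.right⁻¹ j) = a; generalize f j = b
        revert a b; decide
  · rintro ⟨T, ⟨_, hinj, hsurj⟩, hstab⟩
    have hex : ∀ i : Fin 5, ∃ x : ZMod 2, (i, x) ∈ T := by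
      intro i
      obtain ⟨p, hp, hpi⟩ := hsurj (Set.mem_univ i)
      exact ⟨p.2, by rwa [← hpi, Prod.mk.eta] ⟩
    choose f hfT using hex
    have hTf : ∀ p ∈ T, p.2 = f p.1 := by
      rintro ⟨i, x⟩ hp
      have := hinj hp (hfT i) (rfl : (i,x).1 = (i, f i).1)
      exact congrArg Prod.snd this
    refine ⟨Multiplicative.ofAdd f, ?_⟩
    rintro x ⟨w, hw, rfl⟩
    rw [conj_mem_iff]
    intro j
    have hst := hstab w hw
    have himg : act w (w.right⁻¹ j, f (w.right⁻¹ j)) ∈ T := by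
      rw [← hst]; exact ⟨_, hfT _, rfl⟩
    have := hTf _ himg
    unfold act at this
    simp only [(by simp : w.right (w.right⁻¹ j) = j)] at this
    -- this : f (w.right⁻¹ j) + toAdd w.left j = f j
    show Multiplicative.toAdd w.left j = f (w.right⁻¹ j) + f j
    revert this
    generalize Multiplicative.toAdd w.left j = a
    generalize f (w.right⁻¹ j) = b
    generalize f j = c
    revert a b c; decide
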